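/- Let p, q be positive integers with p < q, let d = Υ(p,q) be the least positive integer with p | q + d, and suppose d divides q. Let (a_n) be the greedy Egyptian fraction expansion of p/q. Then a_1 = (q+d)/p, and for every n ≥ 2, p/q − Σ_{i=1}^{n−1} 1/a_i = 1/((q/d)·Π_{i=1}^{n−1} a_i); consequently a_n = (q/d)·Π_{i=1}^{n−1} a_i + 1 for n ≥ 2. -/

import Mathlib

theorem stmt_14 (p q d : ℕ) (hp : 0 < p) (hpq : p < q)
    (hd : 0 < d) (hddvd : p ∣ q + d) (hdmin : ∀ m : ℕ, 0 < m → m < d → ¬ p ∣ q + m)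
    (hdq : d ∣ q)
    (a : ℕ → ℤ)
    (ha1 : a 1 = ⌊1/((p:ℝ)/q)⌋ + 1)
    (harec : ∀ j, 2 ≤ j →
      a j = ⌊1/((p:ℝ)/q - ∑ n ∈ Finset.Ico 1 j, (1:ℝ)/(a n))⌋ + 1) :
    (p : ℤ) * a 1 = q + d ∧
    ∀ n, 2 ≤ n →
      ((p:ℝ)/q - ∑ i ∈ Finset.Ico 1 n, (1:ℝ)/(a i)
        = 1 / (((q:ℝ)/d) * ∏ i ∈ Finset.Ico 1 n, (a i : ℝ))) ∧
      (a n : ℝ) = ((q:ℝ)/d) * ∏ i ∈ Finset.Ico 1 n, (a i : ℝ) + 1 := by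
  -- identify d explicitly
  set e : ℕ := if q % p = 0 then p else p - q % p with he
  have hmodlt : q % p < p := Nat.mod_lt _ hp
  have hepos : 0 < e := by rw [he]; split <;> omega
  have hele : e ≤ p := by rw [he]; split <;> omega
  have hqe : p ∣ q + e := by
    rcases Nat.eq_zero_or_pos (q % p) with h0 | h0
    · simp only [he, if_pos h0]
      exact Nat.dvd_add (Nat.dvd_of_mod_eq_zero h0) dvd_rfl
    · simp only [he, if_neg (Nat.pos_iff_ne_zero.mp h0)]
      have hdm := Nat.div_add_mod q p
      have h1 : q + (p - q % p) = p * (q / p) + p := by omega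
      rw [h1]
      exact Dvd.dvd.add (Dvd.intro _ rfl) dvd_rfl
  have hde : d ≤ e := by
    by_contra h
    exact hdmin e hepos (by omega) hqe
  have hed : e = d := by
    have hdvd : p ∣ e - d := by
      have := Nat.dvd_sub hqe hddvd
      have h2 : q + e - (q + d) = e - d := by omega
      rwa [h2] at this
    have := Nat.eq_zero_of_dvd_of_lt hdvd
    omega
  have key : (q % p = 0 ∧ d = p) ∨ (q % p ≠ 0 ∧ d + q % p = p) := by
    rcases Nat.eq_zero_or_pos (q % p) with h0 | h0
    · left; refine ⟨h0, ?_⟩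
      rw [← hed, he, if_pos h0]
    · right; refine ⟨Nat.pos_iff_ne_zero.mp h0, ?_⟩
      have : e = p - q % p := by rw [he, if_neg (Nat.pos_iff_ne_zero.mp h0)]
      omega
  -- part 1
  have hfloor : ⌊((q:ℝ)/(p:ℝ))⌋ = (q/p : ℕ) := by
    rw [← Nat.floor_div_eq_div (K := ℝ) q p]
    rw [← Int.natCast_floor_eq_floor (by positivity)]
  have part1 : (p : ℤ) * a 1 = q + d := by
    rw [ha1, one_div_div, hfloor, mul_add, mul_one]
    have hdm : (p:ℤ) * (q/p : ℕ) + (q % p : ℕ) = q := by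
      exact_mod_cast Nat.div_add_mod q p
    have key' : ((q % p : ℕ) : ℤ) = 0 ∧ (d:ℤ) = p ∨ (d:ℤ) + (q % p : ℕ) = p := by
      rcases key with ⟨h1, h2⟩ | ⟨h1, h2⟩
      · exact Or.inl ⟨by exact_mod_cast h1, by exact_mod_cast h2⟩
      · exact Or.inr (by exact_mod_cast h2)
    omega
  refine ⟨part1, ?_⟩
  -- setup for part 2
  set N : ℕ := q / d with hN
  have hNd : N * d = q := Nat.div_mul_cancel hdq
  have hNpos : 0 < N := Nat.div_pos (Nat.le_of_dvd (by omega) hdq) hd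
  have hq0 : (q:ℝ) ≠ 0 := Nat.cast_ne_zero.mpr (by omega)
  have hd0 : (d:ℝ) ≠ 0 := Nat.cast_ne_zero.mpr (by omega)
  have hN0 : (N:ℝ) ≠ 0 := Nat.cast_ne_zero.mpr hNpos.ne'
  have hqdN : (q:ℝ)/d = (N:ℝ) := by
    rw [div_eq_iff hd0]; exact_mod_cast hNd.symm
  have ha1pos : 0 < a 1 := by
    nlinarith [part1, (by exact_mod_cast hp : (0:ℤ) < (p:ℤ)),
      (by exact_mod_cast hpq : (p:ℤ) < (q:ℤ)), (by exact_mod_cast hd : (0:ℤ) < (d:ℤ))]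
  have hpa1 : (p:ℝ) * (a 1 : ℝ) = (q:ℝ) + d := by exact_mod_cast part1
  have hqN : (q:ℝ) = (N:ℝ) * d := by exact_mod_cast hNd.symm
  have ha10 : (a 1 : ℝ) ≠ 0 := by exact_mod_cast ha1pos.ne'
  have hIco : Finset.Ico 1 2 = {1} := rfl
  have hr : (p:ℝ)/q - 1/(a 1) = 1/((N:ℝ) * (a 1)) := by
    rw [div_sub_div _ _ hq0 ha10, div_eq_div_iff (by positivity) (by
      exact mul_ne_zero hN0 ha10)]
    have : (p:ℝ) * (a 1) - q = d := by rw [hpa1]; ring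
    rw [hqN] at this ⊢
    linear_combination ((N:ℝ) * (a 1 : ℝ)) * this
  -- main induction
  have main : ∀ n, 2 ≤ n → ∃ K : ℤ, 0 < K ∧
      ((K:ℝ) = (N:ℝ) * ∏ i ∈ Finset.Ico 1 n, (a i : ℝ)) ∧
      ((p:ℝ)/q - ∑ i ∈ Finset.Ico 1 n, (1:ℝ)/(a i) = 1/(K:ℝ)) ∧
      a n = K + 1 := by
    intro n hn
    induction n, hn using Nat.le_induction with
    | base =>
      refine ⟨(N:ℤ) * a 1, by positivity, ?_, ?_, ?_⟩
      · rw [hIco, Finset.prod_singleton]; push_cast; ring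
      · rw [hIco, Finset.sum_singleton]
        push_cast
        exact hr
      · have h2 := harec 2 le_rfl
        rw [hIco, Finset.sum_singleton, hr, one_div_one_div] at h2
        have hc : (N:ℝ) * (a 1 : ℝ) = (((N:ℤ) * a 1 : ℤ) : ℝ) := by push_cast; ring
        rw [h2, hc, Int.floor_intCast]
    | succ n hn ih =>
      obtain ⟨K, hKpos, hKcast, hKrem, hKan⟩ := ih
      have hK0 : (K:ℝ) ≠ 0 := by exact_mod_cast hKpos.ne'
      have hK10 : (K:ℝ) + 1 ≠ 0 := by positivity
      have hanK : (a n : ℝ) = (K:ℝ) + 1 := by exact_mod_cast hKan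
      have hsum : ∑ i ∈ Finset.Ico 1 (n+1), (1:ℝ)/(a i)
          = (∑ i ∈ Finset.Ico 1 n, (1:ℝ)/(a i)) + 1/(a n) :=
        Finset.sum_Ico_succ_top (by omega) _
      have hprod : ∏ i ∈ Finset.Ico 1 (n+1), (a i : ℝ)
          = (∏ i ∈ Finset.Ico 1 n, (a i : ℝ)) * (a n) :=
        Finset.prod_Ico_succ_top (by omega) _
      have hrem : (p:ℝ)/q - ∑ i ∈ Finset.Ico 1 (n+1), (1:ℝ)/(a i)
          = 1/((K:ℝ) * (K+1)) := by
        rw [hsum, hanK]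
        have hs : (p:ℝ)/q - ((∑ i ∈ Finset.Ico 1 n, (1:ℝ)/(a i)) + 1/((K:ℝ)+1))
            = ((p:ℝ)/q - ∑ i ∈ Finset.Ico 1 n, (1:ℝ)/(a i)) - 1/((K:ℝ)+1) := by ring
        rw [hs, hKrem]
        field_simp
        try ring
      refine ⟨K * (K + 1), by positivity, ?_, ?_, ?_⟩
      · rw [hprod, hanK]
        push_cast
        rw [hKcast]
        ring
      · rw [hrem]; push_cast; ring
      · have h2 := harec (n+1) (by omega)
        rw [hrem, one_div_one_div] at h2
        have hc : (K:ℝ) * ((K:ℝ)+1) = ((K * (K+1) : ℤ) : ℝ) := by push_cast; ring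
        rw [h2, hc, Int.floor_intCast]
  -- conclude
  intro n hn
  obtain ⟨K, hKpos, hKcast, hKrem, hKan⟩ := main n hn
  constructor
  · rw [hKrem, hqdN, ← hKcast]
  · rw [hqdN, ← hKcast]
    exact_mod_cast hKan
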